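/- Let q be a prime power and let k be an integer with 1 ≤ k ≤ q+1. Then there exists an F_q-linear code C ⊆ F_q^{q+1} of dimension k and minimum distance q - k + 2 (hence MDS) which is constacyclic: there exists λ ∈ F_q \ {0} such that whenever (c_0, c_1, …, c_q) ∈ C, also (λ·c_q, c_0, …, c_{q-1}) ∈ C. -/

import Mathlib

namespace Stmt0Aux
open Polynomial

variable {K : Type} [Field K]

noncomputable def polyOf (k : ℕ) (A : Fin k → K) : K[X] :=
  ∑ j : Fin k, Polynomial.C (A j) * Polynomial.X ^ (j : ℕ)

lemma eval_polyOf (k : ℕ) (A : Fin k → K) (x : K) :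
    (polyOf k A).eval x = ∑ j : Fin k, A j * x ^ (j : ℕ) := by
  simp [polyOf, Polynomial.eval_finset_sum]

lemma coeff_polyOf (k : ℕ) (A : Fin k → K) (n : ℕ) :
    (polyOf k A).coeff n = if h : n < k then A ⟨n, h⟩ else 0 := by
  rw [polyOf, Polynomial.finset_sum_coeff]
  simp only [Polynomial.coeff_C_mul, Polynomial.coeff_X_pow]
  split_ifs with h
  · rw [Finset.sum_eq_single (⟨n, h⟩ : Fin k)]
    · simp
    · intro b _ hb
      have hne : ¬ (n = (b : ℕ)) := by
        intro hc
        exact hb (Fin.ext hc.symm)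
      simp [hne]
    · intro hn; exact absurd (Finset.mem_univ _) hn
  · apply Finset.sum_eq_zero
    intro b _
    have hne : ¬ (n = (b : ℕ)) := by
      intro hc; subst hc; exact absurd b.isLt h
    simp [hne]

lemma natDegree_polyOf_le (k : ℕ) (A : Fin k → K) : (polyOf k A).natDegree ≤ k - 1 := by
  apply Polynomial.natDegree_sum_le_of_forall_le
  intro j _
  exact le_trans (Polynomial.natDegree_C_mul_X_pow_le _ _) (by omega)

lemma polyOf_eq_zero_iff (k : ℕ) (A : Fin k → K) : polyOf k A = 0 ↔ A = 0 := by
  constructor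
  · intro h
    funext j
    have := coeff_polyOf k A (j : ℕ)
    rw [h] at this
    simp only [Polynomial.coeff_zero] at this
    rw [dif_pos j.isLt] at this
    simpa using this.symm
  · intro h; subst h; simp [polyOf]

lemma polyOf_coeffs (k : ℕ) (Q : K[X]) (hQ : Q.natDegree < k) :
    polyOf k (fun j : Fin k => Q.coeff (j : ℕ)) = Q := by
  ext n
  rw [coeff_polyOf]
  split_ifs with h
  · rfl
  · exact (Polynomial.coeff_eq_zero_of_natDegree_lt (by omega)).symm

/-- evaluation of the twisted form at point index `i`. -/
noncomputable def evE (β : K) (k q : ℕ) (A : Fin k → K) (i : ℕ) : K :=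
  β ^ (i * (k - 1)) * (polyOf k A).eval ((β ^ (q - 1)) ^ i)

lemma evE_add (β : K) (k q : ℕ) (A B : Fin k → K) (i : ℕ) :
    evE β k q (A + B) i = evE β k q A i + evE β k q B i := by
  have : polyOf k (A + B) = polyOf k A + polyOf k B := by
    simp [polyOf, Finset.sum_add_distrib, add_mul]
  simp [evE, this, mul_add]

lemma evE_smul (β : K) (k q : ℕ) (c : K) (A : Fin k → K) (i : ℕ) :
    evE β k q (fun j => c * A j) i = c * evE β k q A i := by
  have : polyOf k (fun j => c * A j) = Polynomial.C c * polyOf k A := by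
    simp [polyOf, Finset.mul_sum, mul_assoc]
  simp [evE, this]
  ring

lemma evE_zero (β : K) (k q : ℕ) (i : ℕ) : evE β k q (0 : Fin k → K) i = 0 := by
  simp [evE, polyOf]

/-- triangular families are linearly independent -/
lemma aux_triangular {F : Type} [Field F] {n N : ℕ} (v : Fin n → Fin N → F)
    (idx : Fin n → Fin N)
    (h0 : ∀ j m : Fin n, m < j → v j (idx m) = 0)
    (h1 : ∀ j, v j (idx j) ≠ 0) : LinearIndependent F v := by
  rw [linearIndependent_iff']
  intro s g hsum
  have key : ∀ t : ℕ, ∀ i ∈ s, (i : ℕ) = t → g i = 0 := by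
    intro t
    induction t using Nat.strong_induction_on with
    | _ t IH =>
      intro i hi hit
      have h := congrFun hsum (idx i)
      simp only [Finset.sum_apply, Pi.smul_apply, smul_eq_mul, Pi.zero_apply] at h
      have h2 : ∀ b ∈ s, b ≠ i → g b * v b (idx i) = 0 := by
        intro b hb hbi
        rcases lt_trichotomy b i with hlt | heq | hgt
        · have hbv : (b : ℕ) < t := by rw [← hit]; exact hlt
          rw [IH (b : ℕ) hbv b hb rfl, zero_mul]
        · exact absurd heq hbi
        · rw [h0 b i hgt, mul_zero]
      rw [Finset.sum_eq_single_of_mem i hi h2] at h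
      rcases mul_eq_zero.mp h with h' | h'
      · exact h'
      · exact absurd h' (h1 i)
  intro i hi
  exact key (i : ℕ) i hi rfl

end Stmt0Aux

/-- For `q` a prime power (realized as the cardinality of a finite field `F`)
and `1 ≤ k ≤ q + 1`, there exists an `F_q`-linear code `C ⊆ F_q^{q+1}` of dimension `k`
and minimum distance `q - k + 2` (hence MDS) which is constacyclic. -/
theorem stmt_0 (q : ℕ) (F : Type) [Field F] [Fintype F] [DecidableEq F]
    (hF : Fintype.card F = q)
    (k : ℕ) (hk1 : 1 ≤ k) (hk2 : k ≤ q + 1) :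
    ∃ C : Submodule F (Fin (q + 1) → F),
      Module.finrank F C = k ∧
      (∀ c ∈ C, c ≠ 0 → q + 2 - k ≤ hammingNorm c) ∧
      (∃ c ∈ C, c ≠ 0 ∧ hammingNorm c = q + 2 - k) ∧
      (∃ lam : F, lam ≠ 0 ∧ ∀ c ∈ C,
        (fun i : Fin (q + 1) => if i = 0 then lam * c (Fin.last q) else c (i - 1)) ∈ C) := by
  classical
  --------------------------------------------------------------------
  -- Setup: the algebraic closure, a primitive (q²-1)-st root of unity
  --------------------------------------------------------------------
  have hq2 : 2 ≤ q := by rw [← hF]; exact Fintype.one_lt_card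
  set p := ringChar F with hp
  haveI hCF : CharP F p := ringChar.charP F
  obtain ⟨m, pp, hqpm⟩ := FiniteField.card F p
  haveI : Fact p.Prime := ⟨pp⟩
  set K := AlgebraicClosure F with hK
  set ι : F →+* K := algebraMap F K with hι
  have ιinj : Function.Injective ι := ι.injective
  haveI : CharP K p := charP_of_injective_ringHom ιinj p
  set N : ℕ := q * q - 1 with hNdef
  have hqq4 : 4 ≤ q * q := by calc 4 = 2*2 := rfl
                                  _ ≤ q*q := Nat.mul_le_mul hq2 hq2
  have hqq2 : 2 * q ≤ q * q := Nat.mul_le_mul_right q hq2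
  have hN1 : N + 1 = q * q := by omega
  have hNpos : 0 < N := by omega
  have hq_pm : q = p ^ (m : ℕ) := by rw [← hF, hqpm]
  have hpq : p ∣ q := by rw [hq_pm]; exact dvd_pow_self p m.ne_zero
  have hNK : NeZero ((N : ℕ) : K) := by
    constructor
    rw [Ne, CharP.cast_eq_zero_iff K p]
    intro hdvd
    have h1 : p ∣ q * q := Dvd.dvd.mul_right hpq q
    have h2 : p ∣ 1 := by
      have := Nat.dvd_sub h1 hdvd
      simpa [(by omega : q * q - N = 1)] using this
    exact Nat.Prime.one_lt pp |>.ne' (Nat.dvd_one.mp h2)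
  obtain ⟨β, hordβ⟩ : ∃ β : K, orderOf β = N := by
    have hcyc : IsCyclotomicExtension {N} K K := by
      apply IsSepClosed.isCyclotomicExtension
      intro a ha _
      rw [Set.mem_singleton_iff] at ha
      subst ha
      exact hNK
    obtain ⟨β, hβprim⟩ := hcyc.exists_isPrimitiveRoot (Set.mem_singleton _) hNpos.ne'
    exact ⟨β, (hβprim.eq_orderOf).symm⟩
  have hβN : β ^ N = 1 := by rw [← hordβ]; exact pow_orderOf_eq_one β
  have hβ0 : β ≠ 0 := by
    intro h
    have := hβN
    rw [h, zero_pow (by omega)] at this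
    exact zero_ne_one this
  set α := β ^ (q - 1) with hα
  have hα0 : α ≠ 0 := pow_ne_zero _ hβ0
  have hfact : (q - 1) * (q + 1) = N := by
    have h1 : 1 ≤ q := by omega
    have h2 : 1 ≤ q * q := by omega
    zify [h1, h2]
    have : (N : ℤ) = q * q - 1 := by push_cast [hNdef]; omega
    rw [this]; ring
  have hdvd : (q - 1) ∣ N := ⟨q + 1, hfact.symm⟩
  have hordα : orderOf α = q + 1 := by
    rw [hα, orderOf_pow_of_dvd (by omega : q - 1 ≠ 0) (hordβ ▸ hdvd), hordβ, ← hfact,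
      Nat.mul_div_cancel_left _ (by omega : 0 < q - 1)]
  have Hinj : ∀ i i' : ℕ, i < q + 1 → i' < q + 1 → α ^ i = α ^ i' → i = i' := by
    intro i i' hi hi' he
    exact pow_injOn_Iio_orderOf (by rw [hordα]; exact hi) (by rw [hordα]; exact hi') he
  have Hfrob : ∀ s : ℕ, (β ^ s) ^ (q * q) = β ^ s := by
    intro s
    rw [← pow_mul, (by rw [← hN1]; ring : s * (q * q) = N * s + s), pow_add, pow_mul, hβN,
      one_pow, one_mul]
  have hqpow : ∀ x y : K, (x + y) ^ q = x ^ q + y ^ q := by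
    intro x y
    rw [hq_pm]
    exact add_pow_char_pow x y p (m : ℕ)
  have hιq : ∀ a : F, (ι a) ^ q = ι a := by
    intro a
    rw [← map_pow]
    congr 1
    rw [← hF]
    exact FiniteField.pow_card a
  -- the fixed points of x ↦ x^q are exactly the image of F
  have hfix : ∀ x : K, x ^ q = x → ∃ a : F, ι a = x := by
    intro x hx
    by_contra hno
    push_neg at hno
    set g : Polynomial K := Polynomial.X ^ q - Polynomial.X with hg
    have hβq : β ^ q ≠ β := by
      intro h
      have h1 : β ^ (q - 1) * β = β := by
        rw [← pow_succ, (by omega : q - 1 + 1 = q), h]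
      have h2 : β ^ (q - 1) = 1 := by
        exact mul_right_cancel₀ hβ0 (h1.trans (one_mul β).symm)
      have hdvd := orderOf_dvd_of_pow_eq_one h2
      rw [hordβ] at hdvd
      have hle := Nat.le_of_dvd (by omega : 0 < q - 1) hdvd
      omega
    have hg0 : g ≠ 0 := by
      intro h
      apply hβq
      have := congrArg (Polynomial.eval β) h
      simp only [hg, Polynomial.eval_sub, Polynomial.eval_pow, Polynomial.eval_X,
        Polynomial.eval_zero] at this
      exact sub_eq_zero.mp this
    have hgdeg : g.natDegree ≤ q := by
      refine le_trans (Polynomial.natDegree_sub_le _ _) ?_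
      simp only [Polynomial.natDegree_X_pow, Polynomial.natDegree_X]
      omega
    have hroot : ∀ y : K, y ^ q = y → y ∈ g.roots.toFinset := by
      intro y hy
      rw [Multiset.mem_toFinset, Polynomial.mem_roots hg0]
      simp [hg, Polynomial.IsRoot, hy]
    set T : Finset K := (Finset.univ : Finset F).image (fun a => ι a) ∪ {x} with hT
    have hTsub : T ⊆ g.roots.toFinset := by
      intro y hy
      rw [hT, Finset.mem_union] at hy
      rcases hy with hy | hy
      · obtain ⟨a, _, rfl⟩ := Finset.mem_image.mp hy
        exact hroot _ (hιq a)
      · rw [Finset.mem_singleton] at hy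
        subst hy
        exact hroot _ hx
    have hTcard : T.card = q + 1 := by
      rw [hT, Finset.card_union_of_disjoint]
      · rw [Finset.card_image_of_injective _ ιinj, Finset.card_singleton, Finset.card_univ, hF]
      · rw [Finset.disjoint_singleton_right]
        intro hc
        obtain ⟨a, _, ha⟩ := Finset.mem_image.mp hc
        exact hno a ha
    have : q + 1 ≤ q := by
      calc q + 1 = T.card := hTcard.symm
        _ ≤ g.roots.toFinset.card := Finset.card_le_card hTsub
        _ ≤ Multiset.card g.roots := Multiset.toFinset_card_le _
        _ ≤ g.natDegree := Polynomial.card_roots' g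
        _ ≤ q := hgdeg
    omega
  -- an element δ with δ^q = -δ
  obtain ⟨δ, hδ0, hδq, hδqq⟩ : ∃ δ : K, δ ≠ 0 ∧ δ ^ q = -δ ∧ δ ^ (q * q) = δ := by
    by_cases hp2 : p = 2
    · refine ⟨1, one_ne_zero, ?_, by rw [one_pow]⟩
      haveI : CharP K 2 := by rw [← hp2]; infer_instance
      rw [one_pow]
      exact (CharTwo.neg_eq 1).symm
    · have hpodd : Odd p := pp.odd_of_ne_two hp2
      have hqodd : Odd q := by rw [hq_pm]; exact hpodd.pow
      obtain ⟨t, ht⟩ := hqodd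
      refine ⟨β ^ ((q + 1) / 2), pow_ne_zero _ hβ0, ?_, Hfrob _⟩
      have hq12 : (q + 1) / 2 = t + 1 := by omega
      have hNhalf : (q + 1) / 2 * (q - 1) = N / 2 ∧ 2 * (N / 2) = N := by
        constructor
        · have h1 : N = 2 * ((t + 1) * (2 * t)) := by
            have hx : N + 1 = (2 * t + 1) * (2 * t + 1) := by rw [← ht]; exact hN1
            have h2 : (2*t+1) * (2*t+1) = 2 * ((t+1)*(2*t)) + 1 := by ring
            omega
          rw [hq12, (by omega : q - 1 = 2 * t), h1]
          omega
        · have hx : N + 1 = (2 * t + 1) * (2 * t + 1) := by rw [← ht]; exact hN1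
          have h2 : (2*t+1) * (2*t+1) = 2 * ((t+1)*(2*t)) + 1 := by ring
          omega
      have hhalf : β ^ (N / 2) = -1 := by
        have hsq : (β ^ (N / 2)) ^ 2 = 1 := by
          rw [← pow_mul, (by omega : N / 2 * 2 = N), hβN]
        have hne1 : β ^ (N / 2) ≠ 1 := by
          intro h
          have hdvd := orderOf_dvd_of_pow_eq_one h
          rw [hordβ] at hdvd
          have hN2 : 0 < N / 2 := by omega
          have := Nat.le_of_dvd hN2 hdvd
          omega
        rcases mul_self_eq_one_iff.mp
            (by rw [← pow_two]; exact hsq : β ^ (N / 2) * β ^ (N / 2) = 1) with h | h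
        · exact absurd h hne1
        · exact h
      calc (β ^ ((q + 1) / 2)) ^ q = β ^ ((q+1)/2) * β ^ ((q+1)/2 * (q - 1)) := by
            rw [← pow_mul, ← pow_add]
            congr 1
            have h1 : 1 ≤ q := by omega
            zify [h1]
            ring
        _ = -(β ^ ((q + 1) / 2)) := by rw [hNhalf.1, hhalf]; ring
  -- the key factorization of the "trace" linear factors
  have Hfactor : ∀ s i : ℕ, δ * (β ^ s)⁻¹ * β ^ i + (δ * (β ^ s)⁻¹ * β ^ i) ^ q
      = -δ * (β ^ (s * q))⁻¹ * β ^ i * (α ^ i - α ^ s) := by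
    intro s i
    have e1 : β ^ i * α ^ i = β ^ (i * q) := by
      rw [hα, ← pow_mul, ← pow_add]
      congr 1
      have h1 : 1 ≤ q := by omega
      zify [h1]; ring
    have e2 : β ^ (s * q) = β ^ s * α ^ s := by
      rw [hα, ← pow_mul, ← pow_add]
      congr 1
      have h1 : 1 ≤ q := by omega
      zify [h1]; ring
    have hβs : (β ^ s) ≠ 0 := pow_ne_zero _ hβ0
    have hβi : (β ^ i) ≠ 0 := pow_ne_zero _ hβ0
    have hβsq : (β ^ (s * q)) ≠ 0 := pow_ne_zero _ hβ0
    rw [hα] at e1 e2 ⊢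
    rw [mul_pow, mul_pow, inv_pow, ← pow_mul, ← pow_mul, hδq]
    have hS := inv_mul_cancel₀ hβs
    have hT := inv_mul_cancel₀ hβsq
    rw [mul_comm (β ^ i) ((β ^ (q-1)) ^ i)] at e1
    linear_combination δ * (β ^ (s * q))⁻¹ * e1 + δ * β ^ i * (β ^ (s * q))⁻¹ * (β ^ s)⁻¹ * e2
      - δ * β ^ i * (β ^ s)⁻¹ * hT + δ * β ^ i * (β ^ (s * q))⁻¹ * (β ^ (q - 1)) ^ s * hS
  have Hfac0 : ∀ s i : ℕ, s ≤ q → i ≤ q →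
      ((δ * (β ^ s)⁻¹ * β ^ i + (δ * (β ^ s)⁻¹ * β ^ i) ^ q = 0) ↔ i = s) := by
    intro s i hs hi
    rw [Hfactor s i]
    constructor
    · intro h
      have h1 : α ^ i - α ^ s = 0 := by
        rcases mul_eq_zero.mp h with h' | h'
        · exfalso
          rcases mul_eq_zero.mp h' with h'' | h''
          · rcases mul_eq_zero.mp h'' with h3 | h3
            · exact neg_ne_zero.mpr hδ0 h3
            · exact inv_ne_zero (pow_ne_zero _ hβ0) h3
          · exact pow_ne_zero _ hβ0 h''
        · exact h'
      exact Hinj i s (by omega) (by omega) (sub_eq_zero.mp h1)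
    · intro h
      subst h
      rw [sub_self, mul_zero]
  -- the span of the evaluation vectors, as an F-submodule of K-valued vectors
  set S : Submodule F (Fin (q + 1) → K) :=
    { carrier := {v | ∃ A : Fin k → K, v = fun i : Fin (q + 1) => Stmt0Aux.evE β k q A (i : ℕ)}
      add_mem' := by
        rintro v w ⟨A, rfl⟩ ⟨B, rfl⟩
        exact ⟨A + B, by funext i; simp [Stmt0Aux.evE_add]⟩
      zero_mem' := ⟨0, by funext i; simp [Stmt0Aux.evE_zero]⟩
      smul_mem' := by
        rintro c v ⟨A, rfl⟩
        refine ⟨fun j => ι c * A j, ?_⟩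
        funext i
        simp only [Pi.smul_apply, Stmt0Aux.evE_smul, Algebra.smul_def]; rfl } with hS
  set ιL : (Fin (q + 1) → F) →ₗ[F] (Fin (q + 1) → K) :=
    LinearMap.compLeft (Algebra.linearMap F K) (Fin (q + 1)) with hιL
  set C : Submodule F (Fin (q + 1) → F) := Submodule.comap ιL S with hC
  have hmemC : ∀ c : Fin (q + 1) → F,
      (c ∈ C ↔ ∃ A : Fin k → K, ∀ i : Fin (q + 1), ι (c i) = Stmt0Aux.evE β k q A (i : ℕ)) := by
    intro c
    constructor
    · rintro ⟨A, hA⟩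
      exact ⟨A, fun i => by
        have := congrFun hA i
        exact this⟩
    · rintro ⟨A, hA⟩
      refine ⟨A, ?_⟩
      funext i
      exact hA i
  -- zero-counting for nonzero evaluation vectors
  have Hzeros : ∀ A : Fin k → K, A ≠ 0 →
      (Finset.univ.filter (fun i : Fin (q + 1) => Stmt0Aux.evE β k q A (i : ℕ) = 0)).card
        ≤ k - 1 := by
    intro A hA
    have hP : Stmt0Aux.polyOf k A ≠ 0 := fun h => hA ((Stmt0Aux.polyOf_eq_zero_iff k A).mp h)
    calc (Finset.univ.filter (fun i : Fin (q + 1) => Stmt0Aux.evE β k q A (i : ℕ) = 0)).card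
        ≤ (Stmt0Aux.polyOf k A).roots.toFinset.card := by
          apply Finset.card_le_card_of_injOn (fun i : Fin (q + 1) => α ^ (i : ℕ))
          · intro i hi
            rw [Finset.mem_coe, Finset.mem_filter] at hi
            have h0 : (Stmt0Aux.polyOf k A).eval (α ^ (i : ℕ)) = 0 := by
              have := hi.2
              rw [Stmt0Aux.evE] at this
              rcases mul_eq_zero.mp this with h' | h'
              · exact absurd h' (pow_ne_zero _ hβ0)
              · rw [hα]; exact h'
            rw [Finset.mem_coe, Multiset.mem_toFinset, Polynomial.mem_roots hP]
            exact h0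
          · intro i _ i' _ he
            exact Fin.ext (Hinj _ _ i.isLt i'.isLt he)
      _ ≤ Multiset.card (Stmt0Aux.polyOf k A).roots := Multiset.toFinset_card_le _
      _ ≤ (Stmt0Aux.polyOf k A).natDegree := Polynomial.card_roots' _
      _ ≤ k - 1 := Stmt0Aux.natDegree_polyOf_le k A
  -- hammingNorm and zero-counting
  have Hnorm : ∀ c : Fin (q + 1) → F,
      hammingNorm c + (Finset.univ.filter (fun i : Fin (q + 1) => c i = 0)).card = q + 1 := by
    intro c
    rw [hammingNorm]
    have heq : (Finset.univ.filter (fun i : Fin (q + 1) => c i ≠ 0))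
        = Finset.univ \ (Finset.univ.filter (fun i : Fin (q + 1) => c i = 0)) := by
      rw [← Finset.filter_not]
    rw [heq, Finset.card_sdiff_of_subset (Finset.filter_subset _ _)]
    have hle := Finset.card_filter_le (Finset.univ : Finset (Fin (q + 1)))
      (fun i : Fin (q + 1) => c i = 0)
    simp only [Finset.card_univ, Fintype.card_fin] at *
    omega

  -- minimum distance lower bound
  have Hmin : ∀ c ∈ C, c ≠ 0 → q + 2 - k ≤ hammingNorm c := by
    intro c hc hc0
    obtain ⟨A, hA⟩ := (hmemC c).mp hc
    have hAne : A ≠ 0 := by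
      intro h
      apply hc0
      funext i
      apply ιinj
      simp only [Pi.zero_apply, map_zero]
      rw [hA i, h, Stmt0Aux.evE_zero]
    have hzeq : (Finset.univ.filter (fun i : Fin (q + 1) => c i = 0))
        = (Finset.univ.filter (fun i : Fin (q + 1) => Stmt0Aux.evE β k q A (i : ℕ) = 0)) := by
      apply Finset.filter_congr
      intro i _
      rw [← hA i]
      constructor
      · intro h; rw [h, map_zero]
      · intro h; apply ιinj; rw [map_zero]; exact h
    have hcount := Hzeros A hAne
    have hnorm := Hnorm c
    rw [hzeq] at hnorm
    omega
  -- products of "trace" linear forms give F-valued codewords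
  have Hvec : ∀ g : Fin (k - 1) → ℕ,
      ∃ (c : Fin (q + 1) → F) (A : Fin k → K),
        (∀ i : Fin (q + 1), ι (c i)
            = ∏ m : Fin (k - 1),
                (δ * (β ^ g m)⁻¹ * β ^ (i : ℕ) + (δ * (β ^ g m)⁻¹ * β ^ (i : ℕ)) ^ q)) ∧
        (∀ i : Fin (q + 1), ι (c i) = Stmt0Aux.evE β k q A (i : ℕ)) := by
    intro g
    set γ : Fin (k - 1) → K := fun m => δ * (β ^ g m)⁻¹ with hγ
    set Q : Polynomial K :=
      ∏ m : Fin (k - 1), (Polynomial.C (γ m) + Polynomial.C ((γ m) ^ q) * Polynomial.X) with hQ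
    have hQdeg : Q.natDegree < k := by
      have h1 : Q.natDegree ≤ ∑ m : Fin (k - 1), 1 := by
        refine le_trans (Polynomial.natDegree_prod_le _ _) ?_
        apply Finset.sum_le_sum
        intro m _
        refine le_trans (Polynomial.natDegree_add_le _ _) ?_
        simp only [Polynomial.natDegree_C, max_le_iff]
        constructor
        · omega
        · exact le_trans (Polynomial.natDegree_mul_le) (by simp)
      simp only [Finset.sum_const, Finset.card_univ, Fintype.card_fin, smul_eq_mul, mul_one] at h1
      omega
    have hprod : ∀ i : ℕ,
        (∏ m : Fin (k - 1), (γ m * β ^ i + (γ m * β ^ i) ^ q))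
          = Stmt0Aux.evE β k q (fun j : Fin k => Q.coeff (j : ℕ)) i := by
      intro i
      have e1 : (β ^ i) ^ q = β ^ i * (β ^ (q - 1)) ^ i := by
        rw [← pow_mul, ← pow_mul, ← pow_add]
        congr 1
        have h1 : 1 ≤ q := by omega
        zify [h1]; ring
      have hfac : ∀ m : Fin (k - 1),
          γ m * β ^ i + (γ m * β ^ i) ^ q = β ^ i * (γ m + (γ m) ^ q * (β ^ (q - 1)) ^ i) := by
        intro m
        rw [mul_pow, e1]
        ring
      calc (∏ m : Fin (k - 1), (γ m * β ^ i + (γ m * β ^ i) ^ q))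
          = ∏ m : Fin (k - 1), (β ^ i * (γ m + (γ m) ^ q * (β ^ (q - 1)) ^ i)) :=
            Finset.prod_congr rfl (fun m _ => hfac m)
        _ = (β ^ i) ^ (k - 1) * ∏ m : Fin (k - 1), (γ m + (γ m) ^ q * (β ^ (q - 1)) ^ i) := by
            rw [Finset.prod_mul_distrib, Finset.prod_const, Finset.card_univ, Fintype.card_fin]
        _ = β ^ (i * (k - 1)) * Q.eval ((β ^ (q - 1)) ^ i) := by
            rw [← pow_mul, hQ, Polynomial.eval_prod]
            congr 1
            exact Finset.prod_congr rfl (fun m _ => by simp)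
        _ = Stmt0Aux.evE β k q (fun j : Fin k => Q.coeff (j : ℕ)) i := by
            rw [Stmt0Aux.evE, Stmt0Aux.polyOf_coeffs k Q hQdeg]
    have hfixed : ∀ i : ℕ,
        (∏ m : Fin (k - 1), (γ m * β ^ i + (γ m * β ^ i) ^ q)) ^ q
          = ∏ m : Fin (k - 1), (γ m * β ^ i + (γ m * β ^ i) ^ q) := by
      intro i
      rw [← Finset.prod_pow]
      apply Finset.prod_congr rfl
      intro m _
      have hx : (γ m * β ^ i) ^ (q * q) = γ m * β ^ i := by
        have hγm : γ m * β ^ i = δ * (β ^ g m)⁻¹ * β ^ i := rfl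
        rw [hγm, mul_pow, mul_pow, inv_pow, Hfrob, Hfrob, hδqq]
      rw [hqpow, ← pow_mul, hx, add_comm]
    have hc : ∀ i : Fin (q + 1), ∃ a : F,
        ι a = ∏ m : Fin (k - 1), (γ m * β ^ (i : ℕ) + (γ m * β ^ (i : ℕ)) ^ q) :=
      fun i => hfix _ (hfixed (i : ℕ))
    exact ⟨fun i => (hc i).choose, fun j : Fin k => Q.coeff (j : ℕ),
      fun i => (hc i).choose_spec,
      fun i => by rw [(hc i).choose_spec, hprod (i : ℕ)]⟩
  -- the triangular family of codewords
  set idx : Fin k → Fin (q + 1) := fun j => Fin.castLE hk2 j with hidx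
  have He : ∀ j : Fin k, ∃ c : Fin (q + 1) → F, c ∈ C ∧
      (∀ mk : Fin k, mk < j → c (idx mk) = 0) ∧ c (idx j) ≠ 0 := by
    intro j
    obtain ⟨c, A, hprod, hevE⟩ := Hvec (fun m => if (m : ℕ) < (j : ℕ) then (m : ℕ) else q)
    refine ⟨c, (hmemC c).mpr ⟨A, hevE⟩, ?_, ?_⟩
    · intro mk hmk
      have hmkj : (mk : ℕ) < (j : ℕ) := hmk
      have hmk1 : (mk : ℕ) < k - 1 := by
        have := j.isLt
        omega
      apply ιinj
      rw [map_zero, hprod (idx mk)]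
      apply Finset.prod_eq_zero (Finset.mem_univ (⟨(mk : ℕ), hmk1⟩ : Fin (k - 1)))
      have hif : (if ((⟨(mk : ℕ), hmk1⟩ : Fin (k - 1)) : ℕ) < (j : ℕ)
          then ((⟨(mk : ℕ), hmk1⟩ : Fin (k - 1)) : ℕ) else q) = (mk : ℕ) := by
        simp only [if_pos hmkj]
      rw [hif]
      have hiv : ((idx mk : Fin (q + 1)) : ℕ) = (mk : ℕ) := rfl
      rw [hiv]
      exact (Hfac0 (mk : ℕ) (mk : ℕ) (by omega) (by omega)).mpr rfl
    · intro h0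
      have hz : ι (c (idx j)) = 0 := by rw [h0, map_zero]
      rw [hprod (idx j)] at hz
      obtain ⟨mm, _, hm⟩ := Finset.prod_eq_zero_iff.mp hz
      have hiv : ((idx j : Fin (q + 1)) : ℕ) = (j : ℕ) := rfl
      by_cases hmj : (mm : ℕ) < (j : ℕ)
      · rw [if_pos hmj] at hm
        have := (Hfac0 (mm : ℕ) ((idx j : Fin (q + 1)) : ℕ)
          (by have := mm.isLt; omega) (by have := (idx j).isLt; omega)).mp hm
        rw [hiv] at this
        omega
      · rw [if_neg hmj] at hm
        have := (Hfac0 q ((idx j : Fin (q + 1)) : ℕ)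
          (le_refl q) (by have := (idx j).isLt; omega)).mp hm
        rw [hiv] at this
        have := mm.isLt
        omega
  -- dimension at least k
  haveI : Module.Finite F (Fin (q + 1) → F) := inferInstance
  have hC_ge : k ≤ Module.finrank F C := by
    choose e he0 he1 he2 using He
    have hli : LinearIndependent F e :=
      Stmt0Aux.aux_triangular e idx (fun j mm h => he1 j mm h) he2
    have hliC : LinearIndependent F (fun j : Fin k => (⟨e j, he0 j⟩ : C)) := by
      apply LinearIndependent.of_comp C.subtype
      exact hli
    have := hliC.fintype_card_le_finrank
    simpa using this
  -- dimension at most k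
  have hC_le : Module.finrank F C ≤ k := by
    have hinj : Function.Injective ((LinearMap.funLeft F F idx).comp C.subtype) := by
      rw [← LinearMap.ker_eq_bot, LinearMap.ker_eq_bot']
      intro x hx
      by_contra hne
      have hxv : (x : Fin (q + 1) → F) ≠ 0 := by
        intro h
        exact hne (Subtype.coe_injective h)
      have hminx := Hmin (x : Fin (q + 1) → F) x.2 hxv
      have hz : k ≤ (Finset.univ.filter
          (fun i : Fin (q + 1) => (x : Fin (q + 1) → F) i = 0)).card := by
        have hcard : (Finset.univ : Finset (Fin k)).card = k := by simp
        rw [← hcard]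
        apply Finset.card_le_card_of_injOn idx
        · intro j _
          rw [Finset.mem_coe, Finset.mem_filter]
          refine ⟨Finset.mem_univ _, ?_⟩
          have := congrFun (congrArg (fun z => (z : Fin k → F)) hx) j
          simpa [LinearMap.funLeft] using this
        · intro a _ b _ hab
          exact Fin.castLE_injective hk2 hab
      have hnorm := Hnorm (x : Fin (q + 1) → F)
      omega
    have hfr := LinearMap.finrank_le_finrank_of_injective hinj
    simpa [Module.finrank_fintype_fun_eq_card] using hfr
  -- a codeword of weight exactly q+2-k
  have Hexact : ∃ c ∈ C, c ≠ 0 ∧ hammingNorm c = q + 2 - k := by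
    obtain ⟨c, A, hprod, hevE⟩ := Hvec (fun m => (m : ℕ) + 1)
    have hcC : c ∈ C := (hmemC c).mpr ⟨A, hevE⟩
    have hkq : k - 1 ≤ q := by omega
    set f : Fin (k - 1) → Fin (q + 1) :=
      fun m => ⟨(m : ℕ) + 1, by have := m.isLt; omega⟩ with hf
    have hzset : (Finset.univ.filter (fun i : Fin (q + 1) => c i = 0))
        = Finset.univ.image f := by
      ext i
      simp only [Finset.mem_filter, Finset.mem_univ, true_and, Finset.mem_image]
      constructor
      · intro h
        have hz : ι (c i) = 0 := by rw [h, map_zero]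
        rw [hprod i] at hz
        obtain ⟨mm, _, hm⟩ := Finset.prod_eq_zero_iff.mp hz
        have hival := (Hfac0 ((mm : ℕ) + 1) (i : ℕ)
          (by have := mm.isLt; omega) (by have := i.isLt; omega)).mp hm
        exact ⟨mm, Fin.ext (by simp [hf, hival])⟩
      · rintro ⟨mm, rfl⟩
        apply ιinj
        rw [map_zero, hprod]
        apply Finset.prod_eq_zero (Finset.mem_univ mm)
        have hfv : ((f mm : Fin (q + 1)) : ℕ) = (mm : ℕ) + 1 := rfl
        rw [hfv]
        exact (Hfac0 ((mm : ℕ) + 1) ((mm : ℕ) + 1)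
          (by have := mm.isLt; omega) (by have := mm.isLt; omega)).mpr rfl
    have hfinj : Function.Injective f := by
      intro a b hab
      have := congrArg Fin.val hab
      simp only [hf] at this
      exact Fin.ext (by omega)
    have hcard : (Finset.univ.image f).card = k - 1 := by
      rw [Finset.card_image_of_injective _ hfinj, Finset.card_univ, Fintype.card_fin]
    have hnorm := Hnorm c
    rw [hzset, hcard] at hnorm
    have hnval : hammingNorm c = q + 2 - k := by omega
    have hc0 : c ≠ 0 := by
      intro h
      rw [h] at hnval
      simp only [hammingNorm_zero] at hnval
      omega
    exact ⟨c, hcC, hc0, hnval⟩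
  -- constacyclicity
  have hlamK : (β ^ (q + 1)) ^ q = β ^ (q + 1) := by
    have hexp : (q + 1) * q = N + (q + 1) := by
      have h1 : (q + 1) * q = q * q + q := by ring
      omega
    rw [← pow_mul, hexp, pow_add, hβN, one_mul]
  obtain ⟨l, hl⟩ := hfix (β ^ (q + 1)) hlamK
  have hl0 : l ≠ 0 := by
    intro h
    rw [h, map_zero] at hl
    exact (pow_ne_zero _ hβ0) hl.symm
  have expand : ∀ (B : Fin k → K) (i : ℕ), Stmt0Aux.evE β k q B i
      = ∑ j : Fin k, B j * (β ^ (i * (k - 1)) * ((β ^ (q - 1)) ^ i) ^ (j : ℕ)) := by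
    intro B i
    rw [Stmt0Aux.evE, Stmt0Aux.eval_polyOf, Finset.mul_sum]
    exact Finset.sum_congr rfl (fun j _ => by ring)
  have hNZ : (N : ℤ) = (q : ℤ) * q - 1 := by push_cast [hNdef]; omega
  refine ⟨C, le_antisymm hC_le hC_ge, Hmin, Hexact,
    ⟨(l ^ (k - 1))⁻¹, inv_ne_zero (pow_ne_zero _ hl0), ?_⟩⟩
  intro c hc
  obtain ⟨A, hA⟩ := (hmemC c).mp hc
  apply (hmemC _).mpr
  refine ⟨fun j : Fin k => A j * (β ^ (k - 1) * (β ^ (q - 1)) ^ (j : ℕ))⁻¹, ?_⟩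
  intro i
  by_cases hi0 : i = 0
  · subst hi0
    simp only [reduceIte]
    rw [map_mul, map_inv₀, map_pow, hl, hA (Fin.last q), Fin.val_last, Fin.val_zero,
      expand, expand, Finset.mul_sum]
    apply Finset.sum_congr rfl
    intro j _
    have h1 : (β ^ (q + 1)) ^ (k - 1) ≠ 0 := pow_ne_zero _ (pow_ne_zero _ hβ0)
    have h2 : β ^ (k - 1) * (β ^ (q - 1)) ^ (j : ℕ) ≠ 0 :=
      mul_ne_zero (pow_ne_zero _ hβ0) (pow_ne_zero _ (pow_ne_zero _ hβ0))
    have hkey : β ^ (q * (k - 1)) * ((β ^ (q - 1)) ^ q) ^ (j : ℕ)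
        * (β ^ (k - 1) * (β ^ (q - 1)) ^ (j : ℕ)) = (β ^ (q + 1)) ^ (k - 1) := by
      have hkey0 : β ^ (q * (k - 1)) * ((β ^ (q - 1)) ^ q) ^ (j : ℕ)
          * (β ^ (k - 1) * (β ^ (q - 1)) ^ (j : ℕ))
          = (β ^ (q + 1)) ^ (k - 1) * (β ^ N) ^ (j : ℕ) := by
        simp only [← pow_mul, ← pow_add]
        congr 1
        have hq1 : 1 ≤ q := by omega
        have hk1' : 1 ≤ k := hk1
        zify [hq1, hk1']
        rw [hNZ]; ring
      rw [hkey0, hβN, one_pow, mul_one]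
    have hD := inv_mul_cancel₀ h2
    have hP := inv_mul_cancel₀ h1
    linear_combination ((β ^ (q + 1)) ^ (k - 1))⁻¹ * A j * (β ^ (k - 1) * (β ^ (q - 1)) ^ (j : ℕ))⁻¹
        * hkey
      - ((β ^ (q + 1)) ^ (k - 1))⁻¹ * A j * (β ^ (q * (k - 1)) * ((β ^ (q - 1)) ^ q) ^ (j : ℕ))
        * hD
      + A j * (β ^ (k - 1) * (β ^ (q - 1)) ^ (j : ℕ))⁻¹ * hP
  · simp only [if_neg hi0]
    rw [hA (i - 1), expand, expand]
    have hival : ((i - 1 : Fin (q + 1)) : ℕ) = (i : ℕ) - 1 := by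
      rw [Fin.coe_sub_one, if_neg hi0]
    rw [hival]
    apply Finset.sum_congr rfl
    intro j _
    have hipos : 1 ≤ (i : ℕ) := by
      rcases Nat.eq_zero_or_pos (i : ℕ) with h | h
      · exact absurd (Fin.ext h : i = 0) hi0
      · exact h
    have h2 : β ^ (k - 1) * (β ^ (q - 1)) ^ (j : ℕ) ≠ 0 :=
      mul_ne_zero (pow_ne_zero _ hβ0) (pow_ne_zero _ (pow_ne_zero _ hβ0))
    have hkey : β ^ (((i : ℕ) - 1) * (k - 1)) * ((β ^ (q - 1)) ^ ((i : ℕ) - 1)) ^ (j : ℕ)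
        * (β ^ (k - 1) * (β ^ (q - 1)) ^ (j : ℕ))
        = β ^ ((i : ℕ) * (k - 1)) * ((β ^ (q - 1)) ^ (i : ℕ)) ^ (j : ℕ) := by
      simp only [← pow_mul, ← pow_add]
      congr 1
      have hq1 : 1 ≤ q := by omega
      have hk1' : 1 ≤ k := hk1
      zify [hq1, hk1', hipos]
      ring
    have hD := inv_mul_cancel₀ h2
    linear_combination A j * (β ^ (k - 1) * (β ^ (q - 1)) ^ (j : ℕ))⁻¹ * hkey
      - A j * (β ^ (((i : ℕ) - 1) * (k - 1)) * ((β ^ (q - 1)) ^ ((i : ℕ) - 1)) ^ (j : ℕ)) * hD
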